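/- With g = min(m,n), the sum of p(w) over all legitimate extended states w equals B · ∑_{b=0}^{g} ∑_{x=0}^{m−b} (ρ^x/x!) · (∏_{r=0}^{x+b−1} θ(r)) · c_b, where ρ = ∑_{i=1}^k ρ_i and c_b = ∑_{a ∈ {I,W,T}^n : #{j : a_j=T} = b} ∏_{j=1}^n (α_j/β_j)^{[a_j=W]} (α_j u_j/(β_j v_j))^{[a_j=T]}. -/

import Mathlib

/-- Activity state of a persistent user: Idle, Waiting, or Transmitting. -/
inductive Act : Type
  | I : Act
  | W : Act
  | T : Act
deriving DecidableEq

instance instFintypeAct : Fintype Act :=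
  ⟨{Act.I, Act.W, Act.T}, fun x => by cases x <;> simp⟩

/-- Number of persistent users that are transmitting. -/
def busyP {n : ℕ} (a : Fin n → Act) : ℕ :=
  (Finset.univ.filter (fun j => a j = Act.T)).card

/-- The factor `(α/β)^{[a=W]} (αu/(βv))^{[a=T]}` contributed by one persistent user. -/
noncomputable def fac (α β u v : ℝ) : Act → ℝ
  | Act.I => 1
  | Act.W => α / β
  | Act.T => α * u / (β * v)

/-- Exponential multinomial identity. -/
lemma multinomial_exp_aux (k N : ℕ) (ρ : Fin k → ℝ) :
    ∑ x ∈ Finset.Nat.antidiagonalTuple k N, ∏ i, ρ i ^ (x i) / (x i).factorial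
      = (∑ i, ρ i) ^ N / N.factorial := by
  classical
  have hset : Finset.Nat.antidiagonalTuple k N
      = Finset.piAntidiag (Finset.univ : Finset (Fin k)) N := by
    ext x
    simp [Finset.Nat.mem_antidiagonalTuple]
  rw [hset, eq_div_iff (by exact_mod_cast N.factorial_ne_zero)]
  rw [Finset.sum_pow_eq_sum_piAntidiag, Finset.sum_mul]
  refine Finset.sum_congr rfl fun x hx => ?_
  have hsum : ∑ i, x i = N := (Finset.mem_piAntidiag.1 hx).1
  have hspec := Nat.multinomial_spec (Finset.univ : Finset (Fin k)) x
  rw [hsum] at hspec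
  have hcast : ((∏ i, (x i).factorial : ℕ) : ℝ) *
      (Nat.multinomial Finset.univ x : ℝ) = (N.factorial : ℝ) := by
    exact_mod_cast congrArg (Nat.cast : ℕ → ℝ) hspec
  have hne : ((∏ i, (x i).factorial : ℕ) : ℝ) ≠ 0 := by
    exact_mod_cast Finset.prod_ne_zero_iff.2 fun i _ => (x i).factorial_ne_zero
  have hmulti : (Nat.multinomial Finset.univ x : ℝ)
      = (N.factorial : ℝ) / ((∏ i, (x i).factorial : ℕ) : ℝ) := by
    rw [eq_div_iff hne, mul_comm]
    exact hcast
  rw [Finset.prod_div_distrib, hmulti]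
  push_cast
  field_simp

/-- the total probability mass over all legitimate extended states equals
`B ∑_{b=0}^{g} ∑_{x=0}^{m-b} (ρ^x/x!) (∏_{r=0}^{x+b-1} θ(r)) c_b` with `g = min m n`. -/
theorem total_mass_grouped_by_busy_persistent
    (m k n : ℕ) (hm : 0 < m) (hk : 0 < k) (hn : 0 < n)
    (θ : ℕ → ℝ)
    (hθ1 : ∀ b ≤ m, 0 ≤ θ b ∧ θ b ≤ 1)
    (hθ2 : ∀ b < m, 0 < θ b)
    (hθ3 : θ m = 0)
    (lam μ : Fin k → ℝ) (hlam : ∀ i, 0 < lam i) (hμ : ∀ i, 0 < μ i)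
    (α β u v : Fin n → ℝ)
    (hα : ∀ j, 0 < α j) (hβ : ∀ j, 0 < β j) (hu : ∀ j, 0 < u j) (hv : ∀ j, 0 < v j)
    (ρ : Fin k → ℝ) (hρ : ∀ i, ρ i = lam i / μ i)
    (B : ℝ) (hB : 0 < B)
    (p : (Fin k → ℕ) → (Fin n → Act) → ℝ)
    (hp : ∀ (x : Fin k → ℕ) (a : Fin n → Act),
      p x a = B * (∏ r ∈ Finset.range (∑ i, x i + busyP a), θ r) *
        (∏ i, ρ i ^ (x i) / (x i).factorial) *
        ∏ j, fac (α j) (β j) (u j) (v j) (a j))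
    (c : ℕ → ℝ)
    (hc : ∀ b, c b = ∑ a ∈ Finset.univ.filter (fun a : Fin n → Act => busyP a = b),
      ∏ j, fac (α j) (β j) (u j) (v j) (a j)) :
    ∑ a : Fin n → Act, ∑ xt ∈ Finset.range (m + 1 - busyP a),
        ∑ x ∈ Finset.Nat.antidiagonalTuple k xt, p x a =
      B * ∑ b ∈ Finset.range (min m n + 1), ∑ xt ∈ Finset.range (m - b + 1),
        (∑ i, ρ i) ^ xt / xt.factorial * (∏ r ∈ Finset.range (xt + b), θ r) * c b := by
  classical
  set ρS : ℝ := ∑ i, ρ i with hρS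
  set F : (Fin n → Act) → ℝ := fun a => ∏ j, fac (α j) (β j) (u j) (v j) (a j) with hF
  set S : ℕ → ℝ := fun b => ∑ xt ∈ Finset.range (m - b + 1),
      ρS ^ xt / xt.factorial * ∏ r ∈ Finset.range (xt + b), θ r with hS
  have hSzero : ∀ b, m < b → S b = 0 := by
    intro b hb
    have h1 : m - b + 1 = 1 := by omega
    simp only [hS, h1, Finset.sum_range_one]
    rw [Finset.prod_eq_zero (Finset.mem_range.2 (by omega : m < 0 + b)) hθ3]
    ring
  -- inner two sums
  have hinner : ∀ a : Fin n → Act,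
      (∑ xt ∈ Finset.range (m + 1 - busyP a),
        ∑ x ∈ Finset.Nat.antidiagonalTuple k xt, p x a) = S (busyP a) * (B * F a) := by
    intro a
    have hstep : ∀ xt : ℕ,
        (∑ x ∈ Finset.Nat.antidiagonalTuple k xt, p x a)
          = B * (∏ r ∈ Finset.range (xt + busyP a), θ r) *
              (ρS ^ xt / xt.factorial) * F a := by
      intro xt
      have h1 : ∀ x ∈ Finset.Nat.antidiagonalTuple k xt,
          p x a = B * (∏ r ∈ Finset.range (xt + busyP a), θ r) *
            (∏ i, ρ i ^ (x i) / (x i).factorial) * F a := by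
        intro x hx
        rw [hp, Finset.Nat.mem_antidiagonalTuple.1 hx]
      rw [Finset.sum_congr rfl h1, ← Finset.sum_mul, ← Finset.mul_sum,
        multinomial_exp_aux k xt ρ]
    rw [Finset.sum_congr rfl fun xt _ => hstep xt]
    by_cases hb : busyP a ≤ m
    · have hr : m + 1 - busyP a = m - busyP a + 1 := by omega
      rw [hr]
      simp only [hS]
      rw [Finset.sum_mul]
      exact Finset.sum_congr rfl fun xt _ => by ring
    · push_neg at hb
      rw [hSzero _ hb]
      have : m + 1 - busyP a = 0 := by omega
      rw [this]
      simp
  rw [Finset.sum_congr rfl fun a _ => hinner a]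
  -- group by busyP
  have hmaps : ∀ a ∈ (Finset.univ : Finset (Fin n → Act)),
      busyP a ∈ Finset.range (n + 1) := by
    intro a _
    have : busyP a ≤ n := by
      have := Finset.card_filter_le (Finset.univ : Finset (Fin n)) (fun j => a j = Act.T)
      simpa [busyP] using this
    exact Finset.mem_range.2 (by omega)
  rw [← Finset.sum_fiberwise_of_maps_to hmaps (fun a => S (busyP a) * (B * F a))]
  have hgrp : ∀ b ∈ Finset.range (n + 1),
      (∑ a ∈ Finset.univ.filter (fun a : Fin n → Act => busyP a = b),
        S (busyP a) * (B * F a)) = B * (S b * c b) := by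
    intro b _
    rw [hc b, Finset.mul_sum, Finset.mul_sum]
    refine Finset.sum_congr rfl fun a ha => ?_
    rw [(Finset.mem_filter.1 ha).2]
    ring
  rw [Finset.sum_congr rfl hgrp, ← Finset.mul_sum]
  congr 1
  -- now equate the b-sums
  have hterm : ∀ b, (∑ xt ∈ Finset.range (m - b + 1),
      ρS ^ xt / xt.factorial * (∏ r ∈ Finset.range (xt + b), θ r) * c b) = S b * c b := by
    intro b
    simp only [hS, Finset.sum_mul]
  rw [Finset.sum_congr rfl fun b _ => hterm b]
  symm
  apply Finset.sum_subset
  · intro b hb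
    exact Finset.mem_range.2 (by
      have := Finset.mem_range.1 hb
      omega)
  · intro b hb hnb
    have hbm : m < b := by
      have h1 := Finset.mem_range.1 hb
      have h2 : ¬ b < min m n + 1 := fun h => hnb (Finset.mem_range.2 h)
      omega
    rw [hSzero _ hbm, zero_mul]
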